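/- arXiv:1303.5486 — 2 statements merged into one kernel-verified Lean document; each statement's English description precedes it below -/
import Mathlib

section
/- Let F(n) be the free group with basis {x₁, …, x_n}. Then the augmentation ideal of ℤ[F(n)] (the kernel of the augmentation ε : ℤ[F(n)] → ℤ sending each group element to 1) is a free left ℤ[F(n)]-module with basis {x₁ − 1, …, x_n − 1}. -/
/-!
Statement 4: Let `F(n)` be the free group with basis `x₁, …, x_n`.  Then the
augmentation ideal of `ℤ[F(n)]` (the kernel of the augmentation `ε : ℤ[F(n)] → ℤ`
sending each group element to `1`) is a free left `ℤ[F(n)]`-module with basis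
`{x₁ − 1, …, x_n − 1}`.
-/

open MonoidAlgebra

noncomputable section

/-- The augmentation `ℤ[F(n)] → ℤ`, the ring homomorphism sending every group
element to `1`. -/
def augF (n : ℕ) : MonoidAlgebra ℤ (FreeGroup (Fin n)) →+* ℤ :=
  (MonoidAlgebra.lift ℤ ℤ (FreeGroup (Fin n)) 1).toRingHom

namespace FoxAux

variable (n : ℕ)

abbrev G (n : ℕ) := FreeGroup (Fin n)
abbrev R (n : ℕ) := MonoidAlgebra ℤ (G n)

/-- Pairs `(g, v)` used to define Fox derivatives, with multiplication
`(g, v) * (h, w) = (g * h, v + g • w)`. -/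
def FoxPair (n : ℕ) := G n × (Fin n → R n)

instance : Group (FoxPair n) where
  mul p q := (p.1 * q.1, fun i => p.2 i + of ℤ (G n) p.1 * q.2 i)
  one := (1, 0)
  inv p := (p.1⁻¹, fun i => -(of ℤ (G n) p.1⁻¹ * p.2 i))
  mul_assoc := by
    rintro ⟨g, v⟩ ⟨h, w⟩ ⟨k, u⟩
    refine Prod.ext (mul_assoc ..) (funext fun i => ?_)
    show (v i + of ℤ (G n) g * w i) + of ℤ (G n) (g * h) * u i
        = v i + of ℤ (G n) g * (w i + of ℤ (G n) h * u i)
    rw [map_mul, mul_add, mul_assoc, add_assoc]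
  one_mul := by
    rintro ⟨g, v⟩
    refine Prod.ext (one_mul _) (funext fun i => ?_)
    show (0 : R n) + of ℤ (G n) 1 * v i = v i
    rw [map_one, one_mul, zero_add]
  mul_one := by
    rintro ⟨g, v⟩
    refine Prod.ext (mul_one _) (funext fun i => ?_)
    show v i + of ℤ (G n) g * 0 = v i
    simp
  inv_mul_cancel := by
    rintro ⟨g, v⟩
    refine Prod.ext (inv_mul_cancel _) (funext fun i => ?_)
    show -(of ℤ (G n) g⁻¹ * v i) + of ℤ (G n) g⁻¹ * v i = (0 : R n)
    simp

@[simp] lemma one_fst : ((1 : FoxPair n).1) = 1 := rfl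
@[simp] lemma one_snd : ((1 : FoxPair n).2) = 0 := rfl
lemma mul_fst (p q : FoxPair n) : (p * q).1 = p.1 * q.1 := rfl
lemma mul_snd (p q : FoxPair n) (i : Fin n) :
    (p * q).2 i = p.2 i + of ℤ (G n) p.1 * q.2 i := rfl

/-- The first projection as a monoid hom. -/
def fstHom : FoxPair n →* G n where
  toFun := Prod.fst
  map_one' := rfl
  map_mul' _ _ := rfl

/-- The universal hom computing all Fox derivatives. -/
def foxHom : G n →* FoxPair n :=
  FreeGroup.lift fun i => (FreeGroup.of i, Pi.single i 1)

@[simp] lemma foxHom_fst (g : G n) : (foxHom n g).1 = g := by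
  have : (fstHom n).comp (foxHom n) = MonoidHom.id (G n) := by
    apply FreeGroup.ext_hom
    intro a
    simp [fstHom, foxHom]
    erw [FreeGroup.lift_apply_of]
  exact DFunLike.congr_fun this g

/-- The `i`-th Fox derivative of a group element. -/
def d (i : Fin n) (g : G n) : R n := (foxHom n g).2 i

@[simp] lemma d_one (i : Fin n) : d n i 1 = 0 := by
  simp [d]

lemma d_mul (i : Fin n) (g h : G n) :
    d n i (g * h) = d n i g + of ℤ (G n) g * d n i h := by
  simp only [d, map_mul, mul_snd, foxHom_fst]

lemma d_of (i j : Fin n) :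
    d n i (FreeGroup.of j) = (Pi.single j (1 : R n) : Fin n → R n) i := by
  simp only [d, foxHom]
  erw [FreeGroup.lift_apply_of]

lemma d_inv (i : Fin n) (g : G n) :
    d n i g⁻¹ = -(of ℤ (G n) g⁻¹ * d n i g) := by
  have h := d_mul n i g⁻¹ g
  rw [inv_mul_cancel, d_one] at h
  exact eq_neg_of_add_eq_zero_left h.symm

/-- The `i`-th Fox derivative as a `ℤ`-linear map on the group ring. -/
def D (i : Fin n) : R n →ₗ[ℤ] R n :=
  Finsupp.linearCombination ℤ (d n i) ∘ₗ (MonoidAlgebra.coeffLinearEquiv ℤ).toLinearMap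

@[simp] lemma D_single (i : Fin n) (g : G n) (c : ℤ) :
    D n i (MonoidAlgebra.single g c) = c • d n i g :=
  Finsupp.linearCombination_single ℤ (v := d n i) c g

@[simp] lemma D_of (i : Fin n) (g : G n) : D n i (of ℤ (G n) g) = d n i g := by
  have : (of ℤ (G n) g : R n) = MonoidAlgebra.single g 1 := rfl
  rw [this, D_single, one_smul]

@[simp] lemma D_one (i : Fin n) : D n i 1 = 0 := by
  have : (1 : R n) = of ℤ (G n) 1 := rfl
  rw [this, D_of, d_one]

@[simp] lemma augF_single (g : G n) (c : ℤ) :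
    augF n (MonoidAlgebra.single g c) = c := by
  simp [augF, MonoidAlgebra.lift_single]

@[simp] lemma augF_of (g : G n) : augF n (of ℤ (G n) g) = 1 := by
  have : (of ℤ (G n) g : R n) = MonoidAlgebra.single g 1 := rfl
  rw [this, augF_single]

lemma D_mul (i : Fin n) (a b : R n) :
    D n i (a * b) = augF n b • D n i a + a * D n i b := by
  induction a using MonoidAlgebra.induction_on with
  | add a₁ a₂ h₁ h₂ =>
      rw [add_mul, map_add, h₁, h₂, map_add, add_mul]
      rw [smul_add]
      abel
  | smul r a ha =>
      rw [smul_mul_assoc, map_smul, ha, map_smul, smul_add, smul_mul_assoc,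
        smul_comm r (augF n b)]
  | of g =>
      induction b using MonoidAlgebra.induction_on with
      | add b₁ b₂ h₁ h₂ =>
          rw [mul_add, map_add, h₁, h₂, map_add, map_add, add_smul, mul_add]
          abel
      | smul r b hb =>
          rw [mul_smul_comm, map_smul, hb, map_zsmul (augF n) r b, map_smul,
            smul_add, smul_assoc, mul_smul_comm]
      | of h =>
          rw [← map_mul, D_of, D_of, D_of, d_mul, augF_of, one_smul]

lemma sum_single_term (j : Fin n) :
    ∑ i, d n i (FreeGroup.of j) * (of ℤ (G n) (FreeGroup.of i) - 1)
      = of ℤ (G n) (FreeGroup.of j) - 1 := by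
  rw [Finset.sum_eq_single j (fun b _ hb => by
      rw [d_of, Pi.single_eq_of_ne hb, zero_mul]) (by simp)]
  rw [d_of, Pi.single_eq_same, one_mul]

lemma step_inv (g : G n)
    (hg : (of ℤ (G n) g : R n)
      = 1 + ∑ i, d n i g * (of ℤ (G n) (FreeGroup.of i) - 1)) :
    (of ℤ (G n) g⁻¹ : R n)
      = 1 + ∑ i, d n i g⁻¹ * (of ℤ (G n) (FreeGroup.of i) - 1) := by
  have sx : ∑ i, d n i g * (of ℤ (G n) (FreeGroup.of i) - 1)
      = of ℤ (G n) g - 1 := eq_sub_iff_add_eq'.mpr hg.symm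
  have h1 : ∀ i : Fin n, d n i g⁻¹ * (of ℤ (G n) (FreeGroup.of i) - 1)
      = -(of ℤ (G n) g⁻¹ * (d n i g * (of ℤ (G n) (FreeGroup.of i) - 1))) := by
    intro i
    rw [d_inv, neg_mul, mul_assoc]
  rw [Finset.sum_congr rfl fun i _ => h1 i, Finset.sum_neg_distrib,
    ← Finset.mul_sum, sx, mul_sub, mul_one, ← map_mul, inv_mul_cancel, map_one]
  noncomm_ring

lemma step_mul (x y : G n)
    (hx : (of ℤ (G n) x : R n)
      = 1 + ∑ i, d n i x * (of ℤ (G n) (FreeGroup.of i) - 1))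
    (hy : (of ℤ (G n) y : R n)
      = 1 + ∑ i, d n i y * (of ℤ (G n) (FreeGroup.of i) - 1)) :
    (of ℤ (G n) (x * y) : R n)
      = 1 + ∑ i, d n i (x * y) * (of ℤ (G n) (FreeGroup.of i) - 1) := by
  have sx : ∑ i, d n i x * (of ℤ (G n) (FreeGroup.of i) - 1)
      = of ℤ (G n) x - 1 := eq_sub_iff_add_eq'.mpr hx.symm
  have sy : ∑ i, d n i y * (of ℤ (G n) (FreeGroup.of i) - 1)
      = of ℤ (G n) y - 1 := eq_sub_iff_add_eq'.mpr hy.symm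
  have h1 : ∀ i : Fin n, d n i (x * y) * (of ℤ (G n) (FreeGroup.of i) - 1)
      = d n i x * (of ℤ (G n) (FreeGroup.of i) - 1)
        + of ℤ (G n) x * (d n i y * (of ℤ (G n) (FreeGroup.of i) - 1)) := by
    intro i
    rw [d_mul, add_mul, mul_assoc]
  rw [Finset.sum_congr rfl fun i _ => h1 i, Finset.sum_add_distrib,
    ← Finset.mul_sum, sx, sy, map_mul]
  noncomm_ring

lemma fundamental_group (g : G n) :
    (of ℤ (G n) g : R n)
      = 1 + ∑ i, d n i g * (of ℤ (G n) (FreeGroup.of i) - 1) := by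
  induction g using FreeGroup.induction_on with
  | C1 =>
      rw [map_one, Finset.sum_congr rfl fun i _ => by rw [d_one, zero_mul]]
      simp
  | of j =>
      show (of ℤ (G n) (FreeGroup.of j) : R n)
        = 1 + ∑ i, d n i (FreeGroup.of j) * (of ℤ (G n) (FreeGroup.of i) - 1)
      rw [sum_single_term]
      noncomm_ring
  | inv_of j hj => exact step_inv n _ hj
  | mul x y hx hy => exact step_mul n x y hx hy

lemma fundamental (a : R n) :
    a = (augF n a) • (1 : R n)
        + ∑ i, D n i a * (of ℤ (G n) (FreeGroup.of i) - 1) := by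
  induction a using MonoidAlgebra.induction_on with
  | of g =>
      rw [augF_of, one_smul]
      rw [Finset.sum_congr rfl fun i _ => by rw [D_of]]
      exact fundamental_group n g
  | add a b ha hb =>
      have h1 : ∀ i : Fin n, D n i (a + b) * (of ℤ (G n) (FreeGroup.of i) - 1)
          = D n i a * (of ℤ (G n) (FreeGroup.of i) - 1)
            + D n i b * (of ℤ (G n) (FreeGroup.of i) - 1) := by
        intro i
        rw [map_add, add_mul]
      rw [map_add, add_smul,
        Finset.sum_congr rfl fun i _ => h1 i, Finset.sum_add_distrib]
      conv_lhs => rw [ha, hb]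
      abel
  | smul r a ha =>
      have h1 : ∀ i : Fin n, D n i (r • a) * (of ℤ (G n) (FreeGroup.of i) - 1)
          = r • (D n i a * (of ℤ (G n) (FreeGroup.of i) - 1)) := by
        intro i
        rw [map_smul, smul_mul_assoc]
      rw [map_zsmul (augF n) r a,
        Finset.sum_congr rfl fun i _ => h1 i, ← Finset.smul_sum, smul_assoc]
      conv_lhs => rw [ha]
      rw [smul_add]

lemma D_X_sub_one (j i : Fin n) :
    D n j (of ℤ (G n) (FreeGroup.of i) - 1)
      = (Pi.single i (1 : R n) : Fin n → R n) j := by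
  rw [map_sub, D_of, D_one, sub_zero, d_of]

lemma augF_X_sub_one (i : Fin n) :
    augF n (of ℤ (G n) (FreeGroup.of i) - 1) = 0 := by
  rw [map_sub, augF_of, map_one, sub_self]

/-- The elements `xᵢ - 1` of the augmentation ideal. -/
def v (i : Fin n) : RingHom.ker (augF n) :=
  ⟨of ℤ (G n) (FreeGroup.of i) - 1, by
    rw [RingHom.mem_ker]; exact augF_X_sub_one n i⟩

@[simp] lemma v_coe (i : Fin n) :
    (v n i : R n) = of ℤ (G n) (FreeGroup.of i) - 1 := rfl

lemma v_linearIndependent : LinearIndependent (R n) (v n) := by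
  rw [Fintype.linearIndependent_iff]
  intro c hc j
  have hc' : ∑ i, c i * (of ℤ (G n) (FreeGroup.of i) - 1) = 0 := by
    have h := congrArg (Subtype.val) hc
    simpa [smul_eq_mul] using h
  have h2 : ∀ i : Fin n, D n j (c i * (of ℤ (G n) (FreeGroup.of i) - 1))
      = c i * (Pi.single i (1 : R n) : Fin n → R n) j := by
    intro i
    rw [D_mul, augF_X_sub_one, zero_smul, zero_add, D_X_sub_one]
  have h3 := congrArg (D n j) hc'
  rw [map_zero, map_sum, Finset.sum_congr rfl fun i _ => h2 i] at h3
  rw [Finset.sum_eq_single j (fun b _ hb => by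
      rw [Pi.single_eq_of_ne (Ne.symm hb), mul_zero]) (by simp)] at h3
  rwa [Pi.single_eq_same, mul_one] at h3

lemma v_span : ⊤ ≤ Submodule.span (R n) (Set.range (v n)) := by
  intro m _
  rw [Submodule.mem_span_range_iff_exists_fun]
  refine ⟨fun i => D n i (m : R n), Subtype.ext ?_⟩
  have hm : augF n (m : R n) = 0 := RingHom.mem_ker.mp m.2
  have hf := fundamental n (m : R n)
  rw [hm, zero_smul, zero_add] at hf
  calc ((∑ i, D n i (m : R n) • v n i : RingHom.ker (augF n)) : R n)
      = ∑ i, D n i (m : R n) * (of ℤ (G n) (FreeGroup.of i) - 1) := by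
        push_cast
        exact Finset.sum_congr rfl fun i _ => by rw [smul_eq_mul, v_coe]
    _ = (m : R n) := hf.symm

end FoxAux

/-- Statement 4: the augmentation ideal of `ℤ[F(n)]` is a free left module with
basis `{xᵢ − 1}`. -/
theorem augmentationIdeal_free_basis (n : ℕ) :
    ∃ B : Module.Basis (Fin n) (MonoidAlgebra ℤ (FreeGroup (Fin n))) (RingHom.ker (augF n)),
      ∀ i : Fin n,
        (B i : MonoidAlgebra ℤ (FreeGroup (Fin n)))
          = MonoidAlgebra.of ℤ (FreeGroup (Fin n)) (FreeGroup.of i) - 1 := by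
  refine ⟨Module.Basis.mk (FoxAux.v_linearIndependent n) (FoxAux.v_span n), fun i => ?_⟩
  rw [Module.Basis.mk_apply]
  rfl

end
end

section
/- Let π be a group of cohomological dimension at most 2 and let C_* be a nonnegatively graded chain complex of projective left ℤ[π]-modules with H₀(C_*) ≅ ℤ (the trivial module) and H₁(C_*) = 0. Let D_* be the chain complex with D₀ = C₀, D₁ = C₁, D₂ = Im(∂₂ : C₂ → C₁) (with differential the inclusion D₂ → C₁ and the differential of C in degree 1), and D_q = 0 for q > 2. Then: (1) the sequence 0 → D₂ → D₁ → D₀ → ℤ → 0 is a projective resolution of ℤ, i.e. D₂ is a projective ℤ[π]-module and the sequence is exact; and (2) C_* is isomorphic, as a chain complex of ℤ[π]-modules, to a direct sum D_* ⊕ C′_*, where C′_* is a chain complex with C′₀ = C′₁ = 0. -/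
/-!
Statement 19: Let π be a group of cohomological dimension at most 2 and let C_* be
a nonnegatively graded chain complex of projective left ℤ[π]-modules with
H₀(C_*) ≅ ℤ (trivial module) and H₁(C_*) = 0.  Let D_* be the complex with
D₀ = C₀, D₁ = C₁, D₂ = Im(∂₂ : C₂ → C₁), D_q = 0 for q > 2.  Then:
(1) 0 → D₂ → D₁ → D₀ → ℤ → 0 is a projective resolution of ℤ (D₂ is projective and
    the sequence is exact); and
(2) C_* is isomorphic, as a chain complex, to a direct sum D_* ⊕ C′_* with
    C′₀ = C′₁ = 0; internally: there are subcomplexes T_*, S_* of C_* with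
    C_i = T_i ⊕ S_i, S₀ = S₁ = 0, and T_* isomorphic to D_* (via the identity in
    degrees ≤ 1 and via ∂₂ in degree 2, with T_q = 0 for q > 2).
-/

open MonoidAlgebra

noncomputable section

/-- The integral group ring `ℤ[π]`. -/
abbrev GR (π : Type) [Group π] : Type := MonoidAlgebra ℤ π

variable {π : Type} [Group π]

/-- `ℤ` as the trivial `ℤ[π]`-module (via the augmentation). -/
def TrivInt (π : Type) [Group π] : Type := ℤ

instance : AddCommGroup (TrivInt π) := inferInstanceAs (AddCommGroup ℤ)

/-- The augmentation `ℤ[π] → ℤ`. -/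
def augZ (π : Type) [Group π] : GR π →+* ℤ :=
  (MonoidAlgebra.lift ℤ ℤ π 1).toRingHom

instance : Module (GR π) (TrivInt π) := Module.compHom ℤ (augZ π)

/-- A projective resolution of length (at most) 2 of a module `M`; the existence of
such a resolution of the trivial module `ℤ` says exactly that the group has
cohomological dimension at most 2. -/
structure ProjRes2 (R : Type) [Ring R] (M : Type) [AddCommGroup M] [Module R M] :
    Type 1 where
  Q0 : Type
  Q1 : Type
  Q2 : Type
  [acg0 : AddCommGroup Q0]
  [acg1 : AddCommGroup Q1]
  [acg2 : AddCommGroup Q2]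
  [mod0 : Module R Q0]
  [mod1 : Module R Q1]
  [mod2 : Module R Q2]
  proj0 : Module.Projective R Q0
  proj1 : Module.Projective R Q1
  proj2 : Module.Projective R Q2
  d0 : Q1 →ₗ[R] Q0
  d1 : Q2 →ₗ[R] Q1
  eps : Q0 →ₗ[R] M
  inj : Function.Injective d1
  ex1 : LinearMap.ker d0 = LinearMap.range d1
  ex0 : LinearMap.ker eps = LinearMap.range d0
  sur : Function.Surjective eps

section HelpersX
variable {R : Type*} [Ring R]

noncomputable def splitKerEquiv {X M : Type*} [AddCommGroup X] [Module R X]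
    [AddCommGroup M] [Module R M] (f : X →ₗ[R] M) (s : M →ₗ[R] X)
    (hs : f.comp s = LinearMap.id) : (LinearMap.ker f × M) ≃ₗ[R] X := by
  have hsa : ∀ m, f (s m) = m := fun m => congrArg (· m) (congrArg DFunLike.coe hs)
  refine LinearEquiv.ofLinear ((LinearMap.ker f).subtype.coprod s)
    (((LinearMap.id - s.comp f).codRestrict (LinearMap.ker f)
      (fun x => by simp [hsa])).prod f) ?_ ?_
  · apply LinearMap.ext; intro x
    simp [hsa]
  · apply LinearMap.ext; rintro ⟨⟨a, ha⟩, m⟩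
    have ha' : f a = 0 := ha
    refine Prod.ext (Subtype.ext ?_) ?_ <;> simp [ha', hsa]

theorem schanuel {P Q M : Type*} [AddCommGroup P] [Module R P]
    [AddCommGroup Q] [Module R Q] [AddCommGroup M] [Module R M]
    (hP : Module.Projective R P) (hQ : Module.Projective R Q)
    (f : P →ₗ[R] M) (g : Q →ₗ[R] M) (hf : Function.Surjective f)
    (hg : Function.Surjective g) :
    Nonempty ((LinearMap.ker f × Q) ≃ₗ[R] (LinearMap.ker g × P)) := by
  set φ : P × Q →ₗ[R] M := f.comp (LinearMap.fst R P Q) - g.comp (LinearMap.snd R P Q) with hφ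
  set X : Submodule R (P × Q) := LinearMap.ker φ with hX
  set p1 : X →ₗ[R] P := (LinearMap.fst R P Q).comp X.subtype with hp1
  set p2 : X →ₗ[R] Q := (LinearMap.snd R P Q).comp X.subtype with hp2
  have hp1s : Function.Surjective p1 := by
    intro p
    obtain ⟨q, hq⟩ := hg (f p)
    exact ⟨⟨(p, q), by simp [hX, hφ, LinearMap.mem_ker, hq]⟩, rfl⟩
  have hp2s : Function.Surjective p2 := by
    intro q
    obtain ⟨p, hp⟩ := hf (g q)
    exact ⟨⟨(p, q), by simp [hX, hφ, LinearMap.mem_ker, hp]⟩, rfl⟩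
  obtain ⟨s1, hs1⟩ := Module.projective_lifting_property p1 LinearMap.id hp1s
  obtain ⟨s2, hs2⟩ := Module.projective_lifting_property p2 LinearMap.id hp2s
  have e1 : LinearMap.ker p1 ≃ₗ[R] LinearMap.ker g := by
    refine
    { toFun := fun x => ⟨(x.1 : P × Q).2, ?_⟩
      map_add' := fun a b => rfl
      map_smul' := fun c a => rfl
      invFun := fun k => ⟨⟨((0 : P), (k : Q)), ?_⟩, ?_⟩
      left_inv := ?_
      right_inv := ?_ }
    · have h1 : (x.1 : P × Q).1 = 0 := x.2
      have h2 : φ x.1 = 0 := x.1.2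
      simp only [hφ, LinearMap.sub_apply, LinearMap.comp_apply, LinearMap.fst_apply,
        LinearMap.snd_apply, sub_eq_zero] at h2
      simpa [LinearMap.mem_ker, h1, ← h2] using h2 ▸ (by simp [h1] : f (x.1 : P × Q).1 = 0)
    · simp [hX, hφ, LinearMap.mem_ker, k.2]
    · exact rfl
    · intro a; apply Subtype.ext; apply Subtype.ext
      have h1 : (a.1 : P × Q).1 = 0 := a.2
      exact Prod.ext (by simp [h1]) rfl
    · intro k; rfl
  have e2 : LinearMap.ker p2 ≃ₗ[R] LinearMap.ker f := by
    refine
    { toFun := fun x => ⟨(x.1 : P × Q).1, ?_⟩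
      map_add' := fun a b => rfl
      map_smul' := fun c a => rfl
      invFun := fun k => ⟨⟨((k : P), (0 : Q)), ?_⟩, ?_⟩
      left_inv := ?_
      right_inv := ?_ }
    · have h1 : (x.1 : P × Q).2 = 0 := x.2
      have h2 : φ x.1 = 0 := x.1.2
      simp only [hφ, LinearMap.sub_apply, LinearMap.comp_apply, LinearMap.fst_apply,
        LinearMap.snd_apply, sub_eq_zero] at h2
      simp [LinearMap.mem_ker, h2, h1]
    · simp [hX, hφ, LinearMap.mem_ker, k.2]
    · exact rfl
    · intro a; apply Subtype.ext; apply Subtype.ext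
      have h1 : (a.1 : P × Q).2 = 0 := a.2
      exact Prod.ext rfl (by simp [h1])
    · intro k; rfl
  exact ⟨(e2.symm.prodCongr (LinearEquiv.refl R Q)).trans <|
    (splitKerEquiv p2 s2 hs2).trans <|
    ((splitKerEquiv p1 s1 hs1).symm).trans <|
    e1.prodCongr (LinearEquiv.refl R P)⟩

noncomputable def kerProdMapIdEquiv {A B M : Type*} [AddCommGroup A] [Module R A]
    [AddCommGroup B] [Module R B] [AddCommGroup M] [Module R M]
    (f : A →ₗ[R] M) :
    LinearMap.ker (f.prodMap (LinearMap.id : B →ₗ[R] B)) ≃ₗ[R] LinearMap.ker f where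
  toFun x := ⟨(x.1 : A × B).1, by
    have := x.2
    simp only [LinearMap.mem_ker, LinearMap.prodMap_apply, Prod.mk.injEq, Prod.ext_iff] at this ⊢
    exact this.1⟩
  map_add' _ _ := rfl
  map_smul' _ _ := rfl
  invFun k := ⟨((k : A), (0 : B)), by
    simp [LinearMap.mem_ker, Prod.ext_iff, k.2]⟩
  left_inv := by
    intro a; apply Subtype.ext
    have h2 : (a.1 : A × B).2 = 0 := by
      have := a.2
      simp only [LinearMap.mem_ker, LinearMap.prodMap_apply, Prod.ext_iff] at this
      simpa using this.2
    exact Prod.ext rfl (by simp [h2])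
  right_inv k := rfl

end HelpersX

/-- Statement 19. -/
theorem chain_complex_splitting
    (π : Type) [Group π]
    -- c.d.π ≤ 2: the trivial module ℤ has projective dimension at most 2:
    (hcd : Nonempty (ProjRes2 (GR π) (TrivInt π)))
    -- a nonnegatively graded chain complex C_* of projective modules:
    (C : ℕ → Type) [∀ i, AddCommGroup (C i)] [∀ i, Module (GR π) (C i)]
    (hproj : ∀ i, Module.Projective (GR π) (C i))
    (dd : ∀ i, C (i + 1) →ₗ[GR π] C i)
    (hcomplex : ∀ i, (dd i).comp (dd (i + 1)) = 0)
    -- H₀(C_*) ≅ ℤ, witnessed by an augmentation ε : C₀ → ℤ: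
    (ε : C 0 →ₗ[GR π] TrivInt π)
    (hsur : Function.Surjective ε)
    (hH0 : LinearMap.ker ε = LinearMap.range (dd 0))
    -- H₁(C_*) = 0:
    (hH1 : LinearMap.ker (dd 0) = LinearMap.range (dd 1)) :
    -- (1) 0 → D₂ → D₁ → D₀ → ℤ → 0 is a projective resolution of ℤ,
    -- where D₂ = Im(∂₂) ⊆ C₁, D₁ = C₁, D₀ = C₀:
    (Module.Projective (GR π) (LinearMap.range (dd 1)) ∧
     Function.Injective ((LinearMap.range (dd 1)).subtype) ∧
     LinearMap.ker (dd 0) = LinearMap.range (dd 1) ∧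
     LinearMap.ker ε = LinearMap.range (dd 0) ∧
     Function.Surjective ε) ∧
    -- (2) C_* ≅ D_* ⊕ C′_* as chain complexes, with C′₀ = C′₁ = 0:
    (∃ (T S : ∀ i, Submodule (GR π) (C i)),
      -- internal direct sum decomposition C_i = T_i ⊕ S_i:
      (∀ i, IsCompl (T i) (S i)) ∧
      -- T_* and S_* are subcomplexes:
      (∀ i, Submodule.map (dd i) (T (i + 1)) ≤ T i) ∧
      (∀ i, Submodule.map (dd i) (S (i + 1)) ≤ S i) ∧
      -- C′ := S has S₀ = S₁ = 0:
      S 0 = ⊥ ∧ S 1 = ⊥ ∧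
      -- T_* is a copy of D_*: it is all of C in degrees 0 and 1, vanishes in
      -- degrees > 2, and in degree 2 it maps isomorphically onto D₂ = Im(∂₂)
      -- under ∂₂ (so that T_* ≅ D_* as chain complexes):
      T 0 = ⊤ ∧ T 1 = ⊤ ∧ (∀ i, 2 < i → T i = ⊥) ∧
      Function.Injective ((dd 1).domRestrict (T 2)) ∧
      Submodule.map (dd 1) (T 2) = LinearMap.range (dd 1)) := by
  classical
  set R := GR π with hR
  obtain ⟨Q⟩ := hcd
  letI := Q.acg0; letI := Q.acg1; letI := Q.acg2
  letI := Q.mod0; letI := Q.mod1; letI := Q.mod2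
  haveI := Q.proj0; haveI := Q.proj1; haveI := Q.proj2
  haveI := hproj 0; haveI := hproj 1; haveI := hproj 2
  -- Step A: K := ker (dd 0) = range (dd 1) is projective.
  have KP : Module.Projective R ↥(LinearMap.range (dd 1)) := by
    -- corestriction of dd 0 to ker ε
    have hmem0 : ∀ x, dd 0 x ∈ LinearMap.ker ε := by
      intro x; rw [hH0]; exact ⟨x, rfl⟩
    set f1 : C 1 →ₗ[R] ↥(LinearMap.ker ε) :=
      (dd 0).codRestrict (LinearMap.ker ε) hmem0 with hf1
    have hf1s : Function.Surjective f1 := by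
      rintro ⟨y, hy⟩
      rw [hH0] at hy
      obtain ⟨x, hx⟩ := hy
      exact ⟨x, Subtype.ext hx⟩
    have hmem0' : ∀ x, Q.d0 x ∈ LinearMap.ker Q.eps := by
      intro x; rw [Q.ex0]; exact ⟨x, rfl⟩
    set g1 : Q.Q1 →ₗ[R] ↥(LinearMap.ker Q.eps) :=
      Q.d0.codRestrict (LinearMap.ker Q.eps) hmem0' with hg1
    have hg1s : Function.Surjective g1 := by
      rintro ⟨y, hy⟩
      rw [Q.ex0] at hy
      obtain ⟨x, hx⟩ := hy
      exact ⟨x, Subtype.ext hx⟩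
    -- Schanuel at level 0
    obtain ⟨e0⟩ := schanuel (hproj 0) Q.proj0 ε Q.eps hsur Q.sur
    -- level-1 surjections onto ker ε × Q0
    set F : C 1 × Q.Q0 →ₗ[R] (↥(LinearMap.ker ε) × Q.Q0) :=
      f1.prodMap LinearMap.id with hF
    have hFs : Function.Surjective F := by
      rintro ⟨a, b⟩
      obtain ⟨x, hx⟩ := hf1s a
      exact ⟨(x, b), by simp [hF, hx]⟩
    set G0 : Q.Q1 × C 0 →ₗ[R] (↥(LinearMap.ker Q.eps) × C 0) :=
      g1.prodMap LinearMap.id with hG0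
    have hG0s : Function.Surjective G0 := by
      rintro ⟨a, b⟩
      obtain ⟨x, hx⟩ := hg1s a
      exact ⟨(x, b), by simp [hG0, hx]⟩
    set G : Q.Q1 × C 0 →ₗ[R] (↥(LinearMap.ker ε) × Q.Q0) :=
      (e0.symm.toLinearMap).comp G0 with hG
    have hGs : Function.Surjective G := by
      exact (EquivLike.surjective e0.symm).comp hG0s
    -- ker G is projective (≅ Q2)
    have hkerG : Module.Projective R ↥(LinearMap.ker G) := by
      have h1 : LinearMap.ker G = LinearMap.ker G0 := by
        ext x
        simp [hG, LinearMap.mem_ker, LinearEquiv.map_eq_zero_iff]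
      have e : ↥(LinearMap.ker G0) ≃ₗ[R] ↥(LinearMap.ker g1) := kerProdMapIdEquiv g1
      have h2 : LinearMap.ker g1 = LinearMap.range Q.d1 := by
        rw [hg1, LinearMap.ker_codRestrict, Q.ex1]
      have e2 : Q.Q2 ≃ₗ[R] ↥(LinearMap.ker g1) :=
        (LinearEquiv.ofInjective Q.d1 Q.inj).trans (LinearEquiv.ofEq _ _ h2.symm)
      have : Module.Projective R ↥(LinearMap.ker g1) := Module.Projective.of_equiv e2
      have : Module.Projective R ↥(LinearMap.ker G0) := Module.Projective.of_equiv e.symm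
      rw [h1]; exact this
    -- Schanuel at level 1
    obtain ⟨e1⟩ := schanuel (inferInstance : Module.Projective R (C 1 × Q.Q0))
      (inferInstance : Module.Projective R (Q.Q1 × C 0)) F G hFs hGs
    haveI := hkerG
    have hbig : Module.Projective R (↥(LinearMap.ker F) × (Q.Q1 × C 0)) :=
      Module.Projective.of_equiv e1.symm
    haveI := hbig
    have hkerF : Module.Projective R ↥(LinearMap.ker F) :=
      Module.Projective.of_split (M := ↥(LinearMap.ker F) × (Q.Q1 × C 0))
        (LinearMap.inl R _ _) (LinearMap.fst R _ _) (LinearMap.ext fun x => rfl)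
    have e3 : ↥(LinearMap.ker F) ≃ₗ[R] ↥(LinearMap.ker f1) := kerProdMapIdEquiv f1
    have h4 : LinearMap.ker f1 = LinearMap.range (dd 1) := by
      rw [hf1, LinearMap.ker_codRestrict, hH1]
    haveI := hkerF
    exact Module.Projective.of_equiv ((e3.trans (LinearEquiv.ofEq _ _ h4)))
  refine ⟨⟨KP, Submodule.injective_subtype _, hH1, hH0, hsur⟩, ?_⟩
  -- Step B: splitting of dd 1 : C 2 → range (dd 1)
  haveI := KP
  set f2 : C 2 →ₗ[R] ↥(LinearMap.range (dd 1)) := (dd 1).rangeRestrict with hf2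
  obtain ⟨s, hs⟩ := Module.projective_lifting_property f2 LinearMap.id
    (LinearMap.surjective_rangeRestrict (dd 1))
  have hsa : ∀ k, f2 (s k) = k := fun k => congrArg (· k) (congrArg DFunLike.coe hs)
  have hsv : ∀ k, dd 1 (s k) = (k : C 1) := by
    intro k
    have := congrArg (Subtype.val) (hsa k)
    simpa [hf2] using this
  set T2 : Submodule R (C 2) := LinearMap.range s with hT2
  set S2 : Submodule R (C 2) := LinearMap.ker (dd 1) with hS2
  have hcompl : IsCompl T2 S2 := by
    constructor
    · rw [disjoint_iff]
      ext x
      simp only [Submodule.mem_inf, Submodule.mem_bot]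
      constructor
      · rintro ⟨⟨k, rfl⟩, hk2⟩
        have : (k : C 1) = 0 := by rw [← hsv k]; exact hk2
        rw [show k = 0 from Subtype.ext this, map_zero]
      · rintro rfl; exact ⟨⟨0, map_zero s⟩, map_zero (dd 1)⟩
    · rw [codisjoint_iff, eq_top_iff]
      intro x _
      have hx2 : x - s (f2 x) ∈ S2 := by
        simp only [hS2, LinearMap.mem_ker, map_sub, hsv (f2 x)]
        simp [hf2, sub_eq_zero]
      have : x = s (f2 x) + (x - s (f2 x)) := by abel
      rw [this]
      exact Submodule.add_mem_sup ⟨f2 x, rfl⟩ hx2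
  refine ⟨(fun i => match i with
            | 0 => ⊤ | 1 => ⊤ | 2 => T2 | (_ + 3) => ⊥),
          (fun i => match i with
            | 0 => ⊥ | 1 => ⊥ | 2 => S2 | (_ + 3) => ⊤), ?_, ?_, ?_, rfl, rfl, rfl, rfl, ?_, ?_, ?_⟩
  · intro i
    match i with
    | 0 => exact isCompl_top_bot
    | 1 => exact isCompl_top_bot
    | 2 => exact hcompl
    | (n + 3) => exact isCompl_bot_top
  · intro i
    match i with
    | 0 => exact le_top
    | 1 => exact le_top
    | 2 => simp
    | (n + 3) => simp
  · intro i
    match i with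
    | 0 => simp
    | 1 =>
      rintro x ⟨y, hy, rfl⟩
      have : dd 1 y = 0 := hy
      simp [this]
    | 2 =>
      rintro x ⟨y, -, rfl⟩
      show dd 2 y ∈ S2
      simp only [hS2, LinearMap.mem_ker]
      exact congrArg (· y) (congrArg DFunLike.coe (hcomplex 1))
    | (n + 3) => exact le_top
  · intro i hi
    match i, hi with
    | (n + 3), _ => rfl
  · rw [← LinearMap.ker_eq_bot, eq_bot_iff]
    rintro ⟨x, k, rfl⟩ hx
    have hx' : dd 1 (s k) = 0 := hx
    rw [hsv k] at hx'
    have : k = 0 := Subtype.ext hx'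
    simp [this]
  · apply le_antisymm
    · rintro x ⟨y, -, rfl⟩
      exact ⟨y, rfl⟩
    · rintro x hx
      exact ⟨s ⟨x, hx⟩, ⟨⟨x, hx⟩, rfl⟩, hsv ⟨x, hx⟩⟩

end
end
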